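/- Let σ be a real m×m matrix. There exists a positive constant C (depending only on σ, m, and the μ_i) such that for all p ≥ 1, all δ ∈ (0,1], and all x ∈ ℝ^m, trace(σσᵀ ∇²𝒱_{p,δ}(x)) ≤ C p² δ² (𝒱_{p-1,δ}(x) + 𝒱_{p-2,δ}(x)). -/

import Mathlib

open scoped BigOperators
open MeasureTheory

noncomputable section

/-- The piecewise function `ψ` from Definition 1 of the paper. -/
def psi (t : ℝ) : ℝ :=
  if t ≤ -1 then -(1/2)
  else if t ≤ 0 then (t+1)^3 - (1/2)*(t+1)^4 - 1/2
  else t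

/-- `Ψ(x) = ∑ i, ψ(x_i)/μ_i`. -/
def Psi (m : ℕ) (μ : Fin m → ℝ) (x : Fin m → ℝ) : ℝ := ∑ i, psi (x i) / μ i

/-- `Ψ_δ(x) = ∑ i, ψ(δ x_i)/μ_i`. -/
def Psid (m : ℕ) (μ : Fin m → ℝ) (δ : ℝ) (x : Fin m → ℝ) : ℝ :=
  ∑ i, psi (δ * x i) / μ i

/-- The scaled Lyapunov function
`𝒱_{p,δ}(x) = (δ² Ψ(-x) + Ψ_δ(x) + m / min_i μ_i)^p`. -/
def Vpd (m : ℕ) (μ : Fin m → ℝ) (δ p : ℝ) (x : Fin m → ℝ) : ℝ :=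
  (δ ^ 2 * Psi m μ (-x) + Psid m μ δ x + (m : ℝ) / ⨅ i, μ i) ^ p

/-- The drift `b̃(x,u) = -(β̃/m) M e - M (x - ⟨e,x⟩⁺ u) - ⟨e,x⟩⁺ Γ u`, written
componentwise, where `M = diag(μ)` and `Γ = diag(γ)`. -/
def drift (m : ℕ) (μ γ : Fin m → ℝ) (β : ℝ) (x u : Fin m → ℝ) : Fin m → ℝ :=
  fun i => -(β / (m : ℝ)) * μ i - μ i * (x i - max (∑ j, x j) 0 * u i)
    - max (∑ j, x j) 0 * (γ i * u i)

/-- `trace(A ∇²f(x)) = ∑ i j, A_{ij} ∂_i ∂_j f(x)`. -/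
def traceHess (m : ℕ) (A : Matrix (Fin m) (Fin m) ℝ) (f : (Fin m → ℝ) → ℝ)
    (x : Fin m → ℝ) : ℝ :=
  ∑ i, ∑ j, A i j *
    fderiv ℝ (fun y => fderiv ℝ f y (Pi.single i (1 : ℝ))) x (Pi.single j (1 : ℝ))

def psid1 (t : ℝ) : ℝ :=
  if t ≤ -1 then 0
  else if t ≤ 0 then 3*(t+1)^2 - 2*(t+1)^3
  else 1

def psid2 (t : ℝ) : ℝ :=
  if t ≤ -1 then 0
  else if t ≤ 0 then 6*(t+1) - 6*(t+1)^2
  else 0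

lemma glue {f L R : ℝ → ℝ} {a d : ℝ} (hL : HasDerivAt L d a) (hR : HasDerivAt R d a)
    (h1 : ∀ᶠ y in nhdsWithin a (Set.Iic a), f y = L y)
    (h2 : ∀ᶠ y in nhdsWithin a (Set.Ici a), f y = R y) : HasDerivAt f d a := by
  have e1 : f a = L a := h1.self_of_nhdsWithin (le_refl a)
  have e2 : f a = R a := h2.self_of_nhdsWithin (le_refl a)
  have l := hL.hasDerivWithinAt.congr_of_eventuallyEq h1 e1
  have r := hR.hasDerivWithinAt.congr_of_eventuallyEq h2 e2
  have := l.union r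
  rwa [Set.Iic_union_Ici, hasDerivWithinAt_univ] at this

lemma hasDerivAt_P (t : ℝ) :
    HasDerivAt (fun t : ℝ => (t+1)^3 - (1/2)*(t+1)^4 - 1/2) (3*(t+1)^2 - 2*(t+1)^3) t := by
  have h1 : HasDerivAt (fun t : ℝ => t + 1) 1 t := (hasDerivAt_id t).add_const 1
  have h3 := h1.fun_pow 3
  have h4 := h1.fun_pow 4
  have := (h3.sub (h4.const_mul (1/2))).sub_const (1/2)
  refine this.congr_deriv ?_
  push_cast
  ring

lemma hasDerivAt_P1 (t : ℝ) :
    HasDerivAt (fun t : ℝ => 3*(t+1)^2 - 2*(t+1)^3) (6*(t+1) - 6*(t+1)^2) t := by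
  have h1 : HasDerivAt (fun t : ℝ => t + 1) 1 t := (hasDerivAt_id t).add_const 1
  have h2 := h1.fun_pow 2
  have h3 := h1.fun_pow 3
  have := (h2.const_mul 3).sub (h3.const_mul 2)
  refine this.congr_deriv ?_
  push_cast
  ring

lemma psi_hasDerivAt (t : ℝ) : HasDerivAt psi (psid1 t) t := by
  rcases lt_trichotomy t (-1) with ht | ht | ht
  · have hev : psi =ᶠ[nhds t] fun _ => -(1/2 : ℝ) := by
      filter_upwards [Iio_mem_nhds ht] with y hy
      simp [psi, (Set.mem_Iio.mp hy).le]
    have := (hasDerivAt_const t (-(1/2 : ℝ))).congr_of_eventuallyEq hev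
    simpa [psid1, ht.le] using this
  · subst ht
    have hd : psid1 (-1 : ℝ) = 0 := by simp [psid1]
    rw [hd]
    have hR : HasDerivAt (fun t : ℝ => (t+1)^3 - (1/2)*(t+1)^4 - 1/2) 0 (-1) := by
      convert hasDerivAt_P (-1) using 1; norm_num
    apply glue (L := fun _ => -(1/2 : ℝ)) (hasDerivAt_const _ _) hR
    · filter_upwards [self_mem_nhdsWithin] with y (hy : y ≤ -1)
      simp [psi, hy]
    · have h0 : ∀ᶠ y in nhdsWithin (-1 : ℝ) (Set.Ici (-1)), y < 0 :=
        eventually_nhdsWithin_of_eventually_nhds (eventually_lt_nhds (by norm_num))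
      filter_upwards [self_mem_nhdsWithin, h0] with y (hy : (-1:ℝ) ≤ y) hy0
      by_cases h : y ≤ -1
      · have : y = -1 := le_antisymm h hy
        subst this
        norm_num [psi]
      · simp [psi, h, hy0.le]
  · rcases lt_trichotomy t 0 with ht0 | ht0 | ht0
    · have hev : psi =ᶠ[nhds t] fun t => (t+1)^3 - (1/2)*(t+1)^4 - 1/2 := by
        filter_upwards [Ioo_mem_nhds ht ht0] with y hy
        simp [psi, not_le.2 hy.1, hy.2.le]
      have := (hasDerivAt_P t).congr_of_eventuallyEq hev
      simpa [psid1, not_le.2 ht, ht0.le] using this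
    · subst ht0
      have hd : psid1 (0 : ℝ) = 1 := by norm_num [psid1]
      rw [hd]
      have hL : HasDerivAt (fun t : ℝ => (t+1)^3 - (1/2)*(t+1)^4 - 1/2) 1 0 := by
        convert hasDerivAt_P 0 using 1; norm_num
      apply glue hL (hasDerivAt_id 0)
      · have h0 : ∀ᶠ y in nhdsWithin (0 : ℝ) (Set.Iic 0), -1 < y :=
          eventually_nhdsWithin_of_eventually_nhds (eventually_gt_nhds (by norm_num))
        filter_upwards [self_mem_nhdsWithin, h0] with y (hy : y ≤ 0) hy1
        simp [psi, not_le.2 hy1, hy]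
      · filter_upwards [self_mem_nhdsWithin] with y (hy : (0:ℝ) ≤ y)
        by_cases h : y ≤ 0
        · have : y = 0 := le_antisymm h hy
          subst this
          norm_num [psi]
        · simp [psi, h, not_le.mpr (by linarith : (-1:ℝ) < y)]
    · have hev : psi =ᶠ[nhds t] fun t => t := by
        filter_upwards [Ioi_mem_nhds ht0] with y hy
        have : (0:ℝ) < y := Set.mem_Ioi.mp hy
        simp [psi, not_le.2 this, not_le.mpr (by linarith : (-1:ℝ) < y)]
      have := (hasDerivAt_id t).congr_of_eventuallyEq hev
      simpa [psid1, not_le.2 ht0, not_le.2 ht] using this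

lemma psid1_hasDerivAt (t : ℝ) : HasDerivAt psid1 (psid2 t) t := by
  rcases lt_trichotomy t (-1) with ht | ht | ht
  · have hev : psid1 =ᶠ[nhds t] fun _ => (0 : ℝ) := by
      filter_upwards [Iio_mem_nhds ht] with y hy
      simp [psid1, (Set.mem_Iio.mp hy).le]
    have := (hasDerivAt_const t (0:ℝ)).congr_of_eventuallyEq hev
    simpa [psid2, ht.le] using this
  · subst ht
    have hd : psid2 (-1 : ℝ) = 0 := by simp [psid2]
    rw [hd]
    have hR : HasDerivAt (fun t : ℝ => 3*(t+1)^2 - 2*(t+1)^3) 0 (-1) := by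
      convert hasDerivAt_P1 (-1) using 1; norm_num
    apply glue (L := fun _ => (0 : ℝ)) (hasDerivAt_const _ _) hR
    · filter_upwards [self_mem_nhdsWithin] with y (hy : y ≤ -1)
      simp [psid1, hy]
    · have h0 : ∀ᶠ y in nhdsWithin (-1 : ℝ) (Set.Ici (-1)), y < 0 :=
        eventually_nhdsWithin_of_eventually_nhds (eventually_lt_nhds (by norm_num))
      filter_upwards [self_mem_nhdsWithin, h0] with y (hy : (-1:ℝ) ≤ y) hy0
      by_cases h : y ≤ -1
      · have : y = -1 := le_antisymm h hy
        subst this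
        norm_num [psid1]
      · simp [psid1, h, hy0.le]
  · rcases lt_trichotomy t 0 with ht0 | ht0 | ht0
    · have hev : psid1 =ᶠ[nhds t] fun t => 3*(t+1)^2 - 2*(t+1)^3 := by
        filter_upwards [Ioo_mem_nhds ht ht0] with y hy
        simp [psid1, not_le.2 hy.1, hy.2.le]
      have := (hasDerivAt_P1 t).congr_of_eventuallyEq hev
      simpa [psid2, not_le.2 ht, ht0.le] using this
    · subst ht0
      have hd : psid2 (0 : ℝ) = 0 := by norm_num [psid2]
      rw [hd]
      have hL : HasDerivAt (fun t : ℝ => 3*(t+1)^2 - 2*(t+1)^3) 0 0 := by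
        convert hasDerivAt_P1 0 using 1; norm_num
      apply glue (R := fun _ => (1:ℝ)) hL (hasDerivAt_const _ _)
      · have h0 : ∀ᶠ y in nhdsWithin (0 : ℝ) (Set.Iic 0), -1 < y :=
          eventually_nhdsWithin_of_eventually_nhds (eventually_gt_nhds (by norm_num))
        filter_upwards [self_mem_nhdsWithin, h0] with y (hy : y ≤ 0) hy1
        simp [psid1, not_le.2 hy1, hy]
      · filter_upwards [self_mem_nhdsWithin] with y (hy : (0:ℝ) ≤ y)
        by_cases h : y ≤ 0
        · have : y = 0 := le_antisymm h hy
          subst this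
          norm_num [psid1]
        · simp [psid1, h, not_le.mpr (by linarith : (-1:ℝ) < y)]
    · have hev : psid1 =ᶠ[nhds t] fun _ => (1:ℝ) := by
        filter_upwards [Ioi_mem_nhds ht0] with y hy
        have : (0:ℝ) < y := Set.mem_Ioi.mp hy
        simp [psid1, not_le.2 this, not_le.mpr (by linarith : (-1:ℝ) < y)]
      have := (hasDerivAt_const t (1:ℝ)).congr_of_eventuallyEq hev
      simpa [psid2, not_le.2 ht0, not_le.2 ht] using this

lemma psid1_nonneg (t : ℝ) : 0 ≤ psid1 t := by
  unfold psid1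
  split_ifs with h1 h2
  · exact le_refl _
  · have h1' := not_le.1 h1
    nlinarith [mul_nonneg (sq_nonneg (t+1)) (by linarith : (0:ℝ) ≤ 3 - 2*(t+1))]
  · norm_num

lemma psid1_le_one (t : ℝ) : psid1 t ≤ 1 := by
  unfold psid1
  split_ifs with h1 h2
  · norm_num
  · have h1' := not_le.1 h1
    nlinarith [mul_nonneg (sq_nonneg (1-(t+1))) (by linarith : (0:ℝ) ≤ 1 + 2*(t+1))]
  · exact le_refl _

lemma psid2_abs_le (t : ℝ) : |psid2 t| ≤ 3/2 := by
  unfold psid2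
  split_ifs with h1 h2
  · norm_num
  · have h1' := not_le.1 h1
    rw [abs_le]
    constructor
    · nlinarith [mul_nonneg (by linarith : (0:ℝ) ≤ t+1) (by linarith : (0:ℝ) ≤ 1-(t+1))]
    · nlinarith [sq_nonneg (2*(t+1)-1)]
  · norm_num

lemma psi_ge (t : ℝ) : -(1/2) ≤ psi t := by
  unfold psi
  split_ifs with h1 h2
  · exact le_refl _
  · have h1' := not_le.1 h1
    nlinarith [mul_nonneg (pow_nonneg (by linarith : (0:ℝ) ≤ t+1) 3)
      (by linarith : (0:ℝ) ≤ 2-(t+1))]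
  · linarith [not_le.1 h2]

lemma psi_nonneg {t : ℝ} (ht : 0 ≤ t) : 0 ≤ psi t := by
  unfold psi
  split_ifs with h1 h2
  · linarith
  · have : t = 0 := le_antisymm h2 ht
    subst this; norm_num
  · exact ht


/-- `F` is the base of the Lyapunov function. -/
def Ffun (m : ℕ) (μ : Fin m → ℝ) (δ : ℝ) (y : Fin m → ℝ) : ℝ :=
  δ ^ 2 * Psi m μ (-y) + Psid m μ δ y + (m : ℝ) / ⨅ i, μ i

lemma Vpd_eq_Ffun (m : ℕ) (μ : Fin m → ℝ) (δ q : ℝ) :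
    Vpd m μ δ q = fun y => Ffun m μ δ y ^ q := rfl

def kfun (μi δ : ℝ) (s : ℝ) : ℝ := δ^2 * (psi (-s) / μi) + psi (δ * s) / μi

def afun (μi δ : ℝ) (s : ℝ) : ℝ := (-(δ^2) * psid1 (-s) + δ * psid1 (δ * s)) / μi

def bfun (μi δ : ℝ) (s : ℝ) : ℝ := (δ^2 * psid2 (-s) + δ^2 * psid2 (δ * s)) / μi

lemma Ffun_eq (m : ℕ) (μ : Fin m → ℝ) (δ : ℝ) :
    Ffun m μ δ = fun y => (∑ i, kfun (μ i) δ (y i)) + (m : ℝ) / ⨅ i, μ i := by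
  funext y
  simp [Ffun, Psi, Psid, kfun, Finset.mul_sum, Finset.sum_add_distrib, mul_div_assoc]

lemma kfun_hasDerivAt (μi δ : ℝ) (s : ℝ) :
    HasDerivAt (kfun μi δ) (afun μi δ s) s := by
  have hneg : HasDerivAt (fun s : ℝ => psi (-s)) (psid1 (-s) * (-1)) s :=
    (psi_hasDerivAt (-s)).comp s (hasDerivAt_neg s)
  have hmul : HasDerivAt (fun s : ℝ => psi (δ * s)) (psid1 (δ * s) * δ) s :=
    (psi_hasDerivAt (δ * s)).comp s (by simpa using (hasDerivAt_id s).const_mul δ)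
  have := ((hneg.div_const μi).const_mul (δ^2)).add (hmul.div_const μi)
  refine this.congr_deriv ?_
  unfold afun
  ring

lemma afun_hasDerivAt (μi δ : ℝ) (s : ℝ) :
    HasDerivAt (afun μi δ) (bfun μi δ s) s := by
  have hneg : HasDerivAt (fun s : ℝ => psid1 (-s)) (psid2 (-s) * (-1)) s :=
    (psid1_hasDerivAt (-s)).comp s (hasDerivAt_neg s)
  have hmul : HasDerivAt (fun s : ℝ => psid1 (δ * s)) (psid2 (δ * s) * δ) s :=
    (psid1_hasDerivAt (δ * s)).comp s (by simpa using (hasDerivAt_id s).const_mul δ)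
  have := ((hneg.const_mul (-(δ^2))).add (hmul.const_mul δ)).div_const μi
  refine this.congr_deriv ?_
  unfold bfun
  ring

/-- The derivative map of `Ffun`. -/
def Dmap (m : ℕ) (μ : Fin m → ℝ) (δ : ℝ) (y : Fin m → ℝ) : (Fin m → ℝ) →L[ℝ] ℝ :=
  ∑ i, afun (μ i) δ (y i) • ContinuousLinearMap.proj i

lemma Ffun_hasFDerivAt (m : ℕ) (μ : Fin m → ℝ) (δ : ℝ) (y : Fin m → ℝ) :
    HasFDerivAt (Ffun m μ δ) (Dmap m μ δ y) y := by
  rw [Ffun_eq]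
  apply HasFDerivAt.add_const
  apply HasFDerivAt.fun_sum
  intro i _
  have h1 : HasFDerivAt (fun z : Fin m → ℝ => z i)
      (ContinuousLinearMap.proj i : (Fin m → ℝ) →L[ℝ] ℝ) y :=
    hasFDerivAt_apply i y
  exact (kfun_hasDerivAt (μ i) δ (y i)).comp_hasFDerivAt y h1

lemma Dmap_apply (m : ℕ) (μ : Fin m → ℝ) (δ : ℝ) (y : Fin m → ℝ) (j : Fin m) :
    Dmap m μ δ y (Pi.single j 1) = afun (μ j) δ (y j) := by
  simp [Dmap, ContinuousLinearMap.sum_apply, Pi.single_apply]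


lemma iInf_μ_pos {m : ℕ} (hm : 1 ≤ m) (μ : Fin m → ℝ) (hμ : ∀ i, 0 < μ i) :
    0 < ⨅ i, μ i ∧ ∀ i, (⨅ i, μ i) ≤ μ i := by
  haveI : Nonempty (Fin m) := Fin.pos_iff_nonempty.mp hm
  obtain ⟨i0, hi0⟩ := Finite.exists_min μ
  exact ⟨lt_of_lt_of_le (hμ i0) (le_ciInf hi0),
    fun i => ciInf_le (Finite.bddBelow_range μ) i⟩

lemma kfun_ge {μi δ : ℝ} (hμi : 0 < μi) (hδ0 : 0 < δ) (hδ1 : δ ≤ 1) (s : ℝ) :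
    -(1/2) * (1/μi) ≤ kfun μi δ s := by
  have key : -(1/2) ≤ δ^2 * psi (-s) + psi (δ * s) := by
    rcases le_or_gt 0 s with hs | hs
    · have h1 := psi_ge (-s)
      have h2 : 0 ≤ psi (δ * s) := psi_nonneg (mul_nonneg hδ0.le hs)
      nlinarith [sq_nonneg δ, mul_nonneg (sq_nonneg δ) (by linarith : 0 ≤ psi (-s) + 1/2)]
    · have h1 : 0 ≤ psi (-s) := psi_nonneg (by linarith)
      have h2 := psi_ge (δ * s)
      nlinarith [mul_nonneg (sq_nonneg δ) h1]
  have h := (div_le_div_iff_of_pos_right hμi).mpr key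
  have e1 : (-(1/2) : ℝ)/μi = -(1/2) * (1/μi) := by ring
  have e2 : (δ^2 * psi (-s) + psi (δ * s))/μi = kfun μi δ s := by
    unfold kfun; ring
  linarith [e1 ▸ e2 ▸ h]

lemma Ffun_pos {m : ℕ} (hm : 1 ≤ m) {μ : Fin m → ℝ} (hμ : ∀ i, 0 < μ i)
    {δ : ℝ} (hδ0 : 0 < δ) (hδ1 : δ ≤ 1) (y : Fin m → ℝ) :
    0 < Ffun m μ δ y := by
  obtain ⟨hι, hle⟩ := iInf_μ_pos hm μ hμ
  set ι := ⨅ i, μ i with hι_def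
  rw [Ffun_eq]
  have per : ∀ i, -(1/2) * (1/ι) ≤ kfun (μ i) δ (y i) := by
    intro i
    refine le_trans ?_ (kfun_ge (hμ i) hδ0 hδ1 (y i))
    have h1 : 1/μ i ≤ 1/ι := one_div_le_one_div_of_le hι (hle i)
    nlinarith [h1]
  have hsum : (m : ℝ) * (-(1/2) * (1/ι)) ≤ ∑ i, kfun (μ i) δ (y i) := by
    calc (m : ℝ) * (-(1/2) * (1/ι)) = ∑ _i : Fin m, -(1/2) * (1/ι) := by
          rw [Finset.sum_const, Finset.card_univ, Fintype.card_fin, nsmul_eq_mul]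
      _ ≤ ∑ i, kfun (μ i) δ (y i) := Finset.sum_le_sum fun i _ => per i
  have hm' : (1:ℝ) ≤ (m:ℝ) := by exact_mod_cast hm
  have heq : (m:ℝ) * (-(1/2) * (1/ι)) + (m:ℝ)/ι = (m:ℝ)/(2*ι) := by
    field_simp
    ring
  have hpos : 0 < (m:ℝ)/(2*ι) := by positivity
  simp only []
  linarith

section main
variable {m : ℕ} {μ : Fin m → ℝ} {δ : ℝ}

lemma Vpd_fderiv_apply (hm : 1 ≤ m) (hμ : ∀ i, 0 < μ i) (hδ0 : 0 < δ) (hδ1 : δ ≤ 1) (q : ℝ) (y : Fin m → ℝ) (i : Fin m) :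
    fderiv ℝ (Vpd m μ δ q) y (Pi.single i 1)
      = q * Ffun m μ δ y ^ (q - 1) * afun (μ i) δ (y i) := by
  have h : HasFDerivAt (Vpd m μ δ q)
      ((q * Ffun m μ δ y ^ (q - 1)) • Dmap m μ δ y) y := by
    rw [Vpd_eq_Ffun]
    exact (Ffun_hasFDerivAt m μ δ y).rpow_const (Or.inl (Ffun_pos hm hμ hδ0 hδ1 y).ne')
  rw [h.fderiv]
  rw [ContinuousLinearMap.smul_apply, Dmap_apply, smul_eq_mul]

lemma hess_entry (hm : 1 ≤ m) (hμ : ∀ i, 0 < μ i) (hδ0 : 0 < δ) (hδ1 : δ ≤ 1) (p : ℝ) (x : Fin m → ℝ) (i j : Fin m) :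
    fderiv ℝ (fun y => fderiv ℝ (Vpd m μ δ p) y (Pi.single i (1:ℝ))) x (Pi.single j (1:ℝ))
      = p * Ffun m μ δ x ^ (p - 1) * bfun (μ i) δ (x i) * (if i = j then (1:ℝ) else 0)
        + p * (p - 1) * Ffun m μ δ x ^ (p - 2) * afun (μ i) δ (x i) * afun (μ j) δ (x j) := by
  have hrw : (fun y => fderiv ℝ (Vpd m μ δ p) y (Pi.single i (1:ℝ)))
      = fun y => p * Ffun m μ δ y ^ (p - 1) * afun (μ i) δ (y i) :=
    funext fun y => Vpd_fderiv_apply hm hμ hδ0 hδ1 p y i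
  rw [hrw]
  have h1 : HasFDerivAt (fun y => p * Ffun m μ δ y ^ (p - 1))
      (p • (((p - 1) * Ffun m μ δ x ^ (p - 1 - 1)) • Dmap m μ δ x)) x :=
    ((Ffun_hasFDerivAt m μ δ x).rpow_const
      (Or.inl (Ffun_pos hm hμ hδ0 hδ1 x).ne')).const_mul p
  have h2 : HasFDerivAt (fun y : Fin m → ℝ => afun (μ i) δ (y i))
      (bfun (μ i) δ (x i) • (ContinuousLinearMap.proj i : (Fin m → ℝ) →L[ℝ] ℝ)) x := by
    exact (afun_hasDerivAt (μ i) δ (x i)).comp_hasFDerivAt x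
      (hasFDerivAt_apply (𝕜 := ℝ) i x)
  have h3 := h1.fun_mul h2
  rw [h3.fderiv]
  have hee : p - 1 - 1 = p - 2 := by ring
  rw [hee]
  simp only [ContinuousLinearMap.add_apply, ContinuousLinearMap.smul_apply,
    Dmap_apply, ContinuousLinearMap.proj_apply, Pi.single_apply, smul_eq_mul]
  ring

end main

noncomputable section final

lemma arith_bound {p d e1 e2 ai aj bi Ai Aj Bi Aij e : ℝ}
    (hp : 1 ≤ p) (hd0 : 0 < d) (hd1 : d ≤ 1)
    (he1 : 0 ≤ e1) (he2 : 0 ≤ e2)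
    (hbi : |bi| ≤ d^2 * Bi) (hai : |ai| ≤ d * Ai) (haj : |aj| ≤ d * Aj)
    (hBi : 0 ≤ Bi) (hAi : 0 ≤ Ai) (hAj : 0 ≤ Aj) (he : |e| ≤ 1) :
    Aij * (p * e1 * bi * e + p * (p - 1) * e2 * ai * aj)
      ≤ |Aij| * (Bi + Ai * Aj) * (p^2 * d^2 * (e1 + e2)) := by
  have hp0 : (0:ℝ) ≤ p := by linarith
  have hp1 : (0:ℝ) ≤ p - 1 := by linarith
  have h1 : |p * e1 * bi * e| ≤ p^2 * d^2 * e1 * Bi := by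
    rw [abs_mul, abs_mul, abs_mul, abs_of_nonneg hp0, abs_of_nonneg he1]
    nlinarith [mul_nonneg (mul_nonneg (mul_nonneg hp0 he1) (abs_nonneg bi))
        (sub_nonneg.mpr he),
      mul_nonneg (mul_nonneg hp0 he1) (sub_nonneg.mpr hbi),
      mul_nonneg (mul_nonneg (mul_nonneg (mul_nonneg hp0 hp1) (sq_nonneg d)) he1) hBi]
  have h2 : |p * (p - 1) * e2 * ai * aj| ≤ p^2 * d^2 * e2 * (Ai * Aj) := by
    rw [abs_mul, abs_mul, abs_mul, abs_mul, abs_of_nonneg hp0, abs_of_nonneg hp1,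
      abs_of_nonneg he2]
    have hprod : |ai| * |aj| ≤ (d * Ai) * (d * Aj) :=
      mul_le_mul hai haj (abs_nonneg _) (mul_nonneg hd0.le hAi)
    nlinarith [mul_nonneg (mul_nonneg (mul_nonneg hp0 hp1) he2) (sub_nonneg.mpr hprod),
      mul_nonneg (mul_nonneg (mul_nonneg hp0 (sq_nonneg d)) he2) (mul_nonneg hAi hAj)]
  have h3 : |p * e1 * bi * e + p * (p - 1) * e2 * ai * aj|
      ≤ p^2 * d^2 * e1 * Bi + p^2 * d^2 * e2 * (Ai * Aj) :=
    le_trans (abs_add_le _ _) (add_le_add h1 h2)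
  have h4 : p^2 * d^2 * e1 * Bi + p^2 * d^2 * e2 * (Ai * Aj)
      ≤ (Bi + Ai * Aj) * (p^2 * d^2 * (e1 + e2)) := by
    nlinarith [mul_nonneg (mul_nonneg (mul_nonneg (sq_nonneg p) (sq_nonneg d)) he1) (mul_nonneg hAi hAj),
      mul_nonneg (mul_nonneg (mul_nonneg (sq_nonneg p) (sq_nonneg d)) he2) hBi]
  calc Aij * (p * e1 * bi * e + p * (p - 1) * e2 * ai * aj)
      ≤ |Aij * (p * e1 * bi * e + p * (p - 1) * e2 * ai * aj)| := le_abs_self _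
    _ = |Aij| * |p * e1 * bi * e + p * (p - 1) * e2 * ai * aj| := abs_mul _ _
    _ ≤ |Aij| * ((Bi + Ai * Aj) * (p^2 * d^2 * (e1 + e2))) :=
        mul_le_mul_of_nonneg_left (le_trans h3 h4) (abs_nonneg _)
    _ = |Aij| * (Bi + Ai * Aj) * (p^2 * d^2 * (e1 + e2)) := by ring

lemma afun_abs_le {μi δ : ℝ} (hμi : 0 < μi) (hδ0 : 0 < δ) (hδ1 : δ ≤ 1) (s : ℝ) :
    |afun μi δ s| ≤ δ * (2 / μi) := by
  have h1 : |psid1 (-s)| ≤ 1 :=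
    abs_le.mpr ⟨by linarith [psid1_nonneg (-s)], psid1_le_one (-s)⟩
  have h2 : |psid1 (δ * s)| ≤ 1 :=
    abs_le.mpr ⟨by linarith [psid1_nonneg (δ * s)], psid1_le_one (δ * s)⟩
  have hnum : |(-(δ^2) * psid1 (-s) + δ * psid1 (δ * s))| ≤ 2 * δ := by
    calc |(-(δ^2) * psid1 (-s) + δ * psid1 (δ * s))|
        ≤ |(-(δ^2)) * psid1 (-s)| + |δ * psid1 (δ * s)| := abs_add_le _ _
      _ = δ^2 * |psid1 (-s)| + δ * |psid1 (δ * s)| := by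
          rw [abs_mul, abs_mul, abs_neg, abs_of_nonneg (sq_nonneg δ), abs_of_nonneg hδ0.le]
      _ ≤ 2 * δ := by nlinarith [abs_nonneg (psid1 (-s)), abs_nonneg (psid1 (δ * s))]
  unfold afun
  rw [abs_div, abs_of_pos hμi]
  have : δ * (2 / μi) = (2 * δ) / μi := by ring
  rw [this]
  exact (div_le_div_iff_of_pos_right hμi).mpr hnum

lemma bfun_abs_le {μi δ : ℝ} (hμi : 0 < μi) (s : ℝ) :
    |bfun μi δ s| ≤ δ^2 * (3 / μi) := by
  have h1 := psid2_abs_le (-s)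
  have h2 := psid2_abs_le (δ * s)
  have hnum : |(δ^2 * psid2 (-s) + δ^2 * psid2 (δ * s))| ≤ 3 * δ^2 := by
    calc |(δ^2 * psid2 (-s) + δ^2 * psid2 (δ * s))|
        ≤ |δ^2 * psid2 (-s)| + |δ^2 * psid2 (δ * s)| := abs_add_le _ _
      _ = δ^2 * |psid2 (-s)| + δ^2 * |psid2 (δ * s)| := by
          rw [abs_mul, abs_mul, abs_of_nonneg (sq_nonneg δ)]
      _ ≤ 3 * δ^2 := by nlinarith [sq_nonneg δ]
  unfold bfun
  rw [abs_div, abs_of_pos hμi]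
  have : δ^2 * (3 / μi) = (3 * δ^2) / μi := by ring
  rw [this]
  exact (div_le_div_iff_of_pos_right hμi).mpr hnum

end final

/-- There is a constant `C > 0` (depending only on `σ`, `m`, and the `μ_i`) such
that for all `p ≥ 1`, `δ ∈ (0,1]`, and `x ∈ ℝ^m`,
`trace(σσᵀ ∇²𝒱_{p,δ}(x)) ≤ C p² δ² (𝒱_{p-1,δ}(x) + 𝒱_{p-2,δ}(x))`. -/
theorem stmt_14 (m : ℕ) (hm : 1 ≤ m) (μ : Fin m → ℝ) (hμ : ∀ i, 0 < μ i)
    (σ : Matrix (Fin m) (Fin m) ℝ) :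
    ∃ C : ℝ, 0 < C ∧ ∀ p : ℝ, 1 ≤ p → ∀ δ : ℝ, 0 < δ → δ ≤ 1 → ∀ x : Fin m → ℝ,
      traceHess m (σ * σ.transpose) (Vpd m μ δ p) x ≤
        C * p ^ 2 * δ ^ 2 * (Vpd m μ δ (p - 1) x + Vpd m μ δ (p - 2) x) := by
  set C0 : ℝ :=
    ∑ i, ∑ j, |(σ * σ.transpose) i j| * (3 / μ i + (2 / μ i) * (2 / μ j)) with hC0
  have hC0nn : 0 ≤ C0 := by
    apply Finset.sum_nonneg
    intro i _
    apply Finset.sum_nonneg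
    intro j _
    have hi := hμ i
    have hj := hμ j
    have : 0 ≤ 3 / μ i + (2 / μ i) * (2 / μ j) := by positivity
    exact mul_nonneg (abs_nonneg _) this
  refine ⟨C0 + 1, by linarith, ?_⟩
  intro p hp δ hδ0 hδ1 x
  have hF := Ffun_pos hm hμ hδ0 hδ1 x
  have hE1 : 0 ≤ Ffun m μ δ x ^ (p - 1) := Real.rpow_nonneg hF.le _
  have hE2 : 0 ≤ Ffun m μ δ x ^ (p - 2) := Real.rpow_nonneg hF.le _
  have hS : 0 ≤ p^2 * δ^2 * (Ffun m μ δ x ^ (p - 1) + Ffun m μ δ x ^ (p - 2)) :=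
    mul_nonneg (mul_nonneg (sq_nonneg p) (sq_nonneg δ)) (add_nonneg hE1 hE2)
  have entry : ∀ i j : Fin m,
      (σ * σ.transpose) i j *
        fderiv ℝ (fun y => fderiv ℝ (Vpd m μ δ p) y (Pi.single i (1:ℝ))) x
          (Pi.single j (1:ℝ))
      ≤ |(σ * σ.transpose) i j| * (3 / μ i + (2 / μ i) * (2 / μ j)) *
          (p^2 * δ^2 * (Ffun m μ δ x ^ (p - 1) + Ffun m μ δ x ^ (p - 2))) := by
    intro i j
    rw [hess_entry hm hμ hδ0 hδ1 p x i j]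
    have he : |(if i = j then (1:ℝ) else 0)| ≤ 1 := by split_ifs <;> norm_num
    have h := arith_bound (Aij := (σ * σ.transpose) i j) hp hδ0 hδ1 hE1 hE2
      (bfun_abs_le (hμ i) (x i)) (afun_abs_le (hμ i) hδ0 hδ1 (x i))
      (afun_abs_le (hμ j) hδ0 hδ1 (x j))
      (le_of_lt (div_pos (by norm_num) (hμ i)))
      (le_of_lt (div_pos (by norm_num) (hμ i)))
      (le_of_lt (div_pos (by norm_num) (hμ j))) he
    exact h
  calc traceHess m (σ * σ.transpose) (Vpd m μ δ p) x
      ≤ (∑ i, ∑ j, |(σ * σ.transpose) i j| * (3 / μ i + (2 / μ i) * (2 / μ j)) *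
          (p^2 * δ^2 * (Ffun m μ δ x ^ (p - 1) + Ffun m μ δ x ^ (p - 2)))) := by
        unfold traceHess
        exact Finset.sum_le_sum fun i _ => Finset.sum_le_sum fun j _ => entry i j
    _ = C0 * (p^2 * δ^2 * (Ffun m μ δ x ^ (p - 1) + Ffun m μ δ x ^ (p - 2))) := by
        rw [hC0, Finset.sum_mul]
        exact Finset.sum_congr rfl fun i _ => by rw [Finset.sum_mul]
    _ ≤ (C0 + 1) * (p^2 * δ^2 * (Ffun m μ δ x ^ (p - 1) + Ffun m μ δ x ^ (p - 2))) :=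
        mul_le_mul_of_nonneg_right (by linarith) hS
    _ = (C0 + 1) * p ^ 2 * δ ^ 2 * (Vpd m μ δ (p - 1) x + Vpd m μ δ (p - 2) x) := by
        have h1 : Vpd m μ δ (p - 1) x = Ffun m μ δ x ^ (p - 1) := rfl
        have h2 : Vpd m μ δ (p - 2) x = Ffun m μ δ x ^ (p - 2) := rfl
        rw [h1, h2]; ring


end
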